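/- With the setup of the L₃ code and a, b both nonzero, det(X_S X_Sᴴ)·det(X_T X_Tᴴ) = (|a|² + |b|²)(|σ(a)|² + |b|²)² > 0, where X_S = (a, b) is the first row and X_T is the Alamouti block with rows (σ(a), -conj(b)), (b, conj(σ(a))). -/

import Mathlib

open Complex Matrix ComplexConjugate

theorem L3_parallel_full_diversity (k₀ k₁ k₂ k₃ : ℤ) (b : GaussianInt)
    (ha : (k₀ : ℂ) + k₁ * Complex.exp (2 * Real.pi * Complex.I / 8)
        + k₂ * Complex.exp (2 * Real.pi * Complex.I / 8)^2
        + k₃ * Complex.exp (2 * Real.pi * Complex.I / 8)^3 ≠ 0)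
    (hb : b ≠ 0) :
    let ζ : ℂ := Complex.exp (2 * Real.pi * Complex.I / 8)
    let a : ℂ := k₀ + k₁ * ζ + k₂ * ζ^2 + k₃ * ζ^3
    let sa : ℂ := k₀ - k₁ * ζ + k₂ * ζ^2 - k₃ * ζ^3
    let XS : Matrix (Fin 1) (Fin 2) ℂ := !![a, (b : ℂ)]
    let XT : Matrix (Fin 2) (Fin 2) ℂ :=
      !![sa, -(starRingEnd ℂ) (b : ℂ); (b : ℂ), (starRingEnd ℂ) sa]
    (XS * XSᴴ).det * (XT * XTᴴ).det =
      (((‖a‖^2 + ‖(b : ℂ)‖^2)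
        * (‖sa‖^2 + ‖(b : ℂ)‖^2)^2 : ℝ) : ℂ) ∧
    0 < (‖a‖^2 + ‖(b : ℂ)‖^2)
        * (‖sa‖^2 + ‖(b : ℂ)‖^2)^2 := by
  intro ζ a sa XS XT
  have hbC : (b : ℂ) ≠ 0 := fun h => hb (GaussianInt.toComplex_eq_zero.mp h)
  constructor
  · have h1 : (XS * XSᴴ).det = a * conj a + (b : ℂ) * conj (b : ℂ) := by
      simp [XS, Matrix.det_fin_one, Matrix.mul_apply, Fin.sum_univ_two,
        Matrix.conjTranspose_apply, Matrix.vecMul, dotProduct, Matrix.vecHead, Matrix.vecTail,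
        Complex.star_def]
    have h2 : (XT * XTᴴ).det
        = (sa * conj sa + (b : ℂ) * conj (b : ℂ))^2 := by
      simp [XT, Matrix.det_fin_two, Matrix.mul_apply, Fin.sum_univ_two,
        Matrix.conjTranspose_apply, Matrix.vecMul, dotProduct, Matrix.vecHead, Matrix.vecTail,
        Complex.star_def]
      ring
    rw [h1, h2, Complex.mul_conj, Complex.mul_conj, Complex.mul_conj]
    norm_cast
    simp [Complex.normSq_eq_norm_sq]
  · have hb2 : 0 < ‖(b : ℂ)‖^2 := pow_pos (norm_pos_iff.mpr hbC) 2
    have h1 : 0 < ‖a‖^2 + ‖(b : ℂ)‖^2 :=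
      add_pos_of_nonneg_of_pos (by positivity) hb2
    have h2 : 0 < ‖sa‖^2 + ‖(b : ℂ)‖^2 :=
      add_pos_of_nonneg_of_pos (by positivity) hb2
    exact mul_pos h1 (pow_pos h2 2)
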